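/- Let μ be a discrete measure on a finite set X with positive masses λ_i, S a finite-dimensional function space on X containing the constants, {ψ_k} a μ-orthonormal basis of S|_X, V its Vandermonde matrix at X, and u ≥ 0 with ‖V^t u − V^t λ‖_2 = ε. Let (T, w) be the quadrature formula from the nonzero entries of u. Then for every function f on X: |∑_i λ_i f(x_i) − ∑_j w_j f(t_j)| ≤ 2(μ(X) + ε√(μ(X))) · E_S(f; X) + ε ‖f‖_{ℓ²_λ(X)}, where E_S(f;X) = min_{φ∈S} max_{x∈X} |f(x) − φ(x)|. -/
import Mathlib

/-- Cauchy–Schwarz for finite sums of reals. -/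
private lemma cs_abs {n : ℕ} (p q : Fin n → ℝ) :
    |∑ k, p k * q k| ≤ Real.sqrt (∑ k, p k ^ 2) * Real.sqrt (∑ k, q k ^ 2) := by
  have h := Finset.sum_mul_sq_le_sq_mul_sq Finset.univ p q
  have h1 : |∑ k, p k * q k| = Real.sqrt ((∑ k, p k * q k) ^ 2) :=
    (Real.sqrt_sq_eq_abs _).symm
  rw [h1, ← Real.sqrt_mul (by positivity)]
  exact Real.sqrt_le_sqrt h

/-- Weighted Minkowski inequality for finite sums of reals. -/
private lemma minkowski_w {n : ℕ} (w a b : Fin n → ℝ) (hw : ∀ i, 0 ≤ w i) :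
    Real.sqrt (∑ i, w i * (a i + b i) ^ 2)
      ≤ Real.sqrt (∑ i, w i * a i ^ 2) + Real.sqrt (∑ i, w i * b i ^ 2) := by
  set A := Real.sqrt (∑ i, w i * a i ^ 2) with hA
  set B := Real.sqrt (∑ i, w i * b i ^ 2) with hB
  have hA0 : 0 ≤ A := Real.sqrt_nonneg _
  have hB0 : 0 ≤ B := Real.sqrt_nonneg _
  have hA2 : A ^ 2 = ∑ i, w i * a i ^ 2 :=
    Real.sq_sqrt (Finset.sum_nonneg fun i _ => mul_nonneg (hw i) (sq_nonneg _))
  have hB2 : B ^ 2 = ∑ i, w i * b i ^ 2 :=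
    Real.sq_sqrt (Finset.sum_nonneg fun i _ => mul_nonneg (hw i) (sq_nonneg _))
  have hcs : ∑ i, w i * (a i * b i) ≤ A * B := by
    have h1 : ∑ i, w i * (a i * b i)
        = ∑ i, (Real.sqrt (w i) * a i) * (Real.sqrt (w i) * b i) := by
      apply Finset.sum_congr rfl
      intro i _
      rw [show (Real.sqrt (w i) * a i) * (Real.sqrt (w i) * b i)
            = (Real.sqrt (w i) * Real.sqrt (w i)) * (a i * b i) by ring,
          Real.mul_self_sqrt (hw i)]
    have h2 : ∀ i : Fin n, (Real.sqrt (w i) * a i) ^ 2 = w i * a i ^ 2 := by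
      intro i
      have : Real.sqrt (w i) ^ 2 = w i := Real.sq_sqrt (hw i)
      nlinarith [this]
    have h3 : ∀ i : Fin n, (Real.sqrt (w i) * b i) ^ 2 = w i * b i ^ 2 := by
      intro i
      have : Real.sqrt (w i) ^ 2 = w i := Real.sq_sqrt (hw i)
      nlinarith [this]
    calc ∑ i, w i * (a i * b i)
        = ∑ i, (Real.sqrt (w i) * a i) * (Real.sqrt (w i) * b i) := h1
      _ ≤ |∑ i, (Real.sqrt (w i) * a i) * (Real.sqrt (w i) * b i)| := le_abs_self _
      _ ≤ Real.sqrt (∑ i, (Real.sqrt (w i) * a i) ^ 2) *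
            Real.sqrt (∑ i, (Real.sqrt (w i) * b i) ^ 2) := cs_abs _ _
      _ = A * B := by
          rw [Finset.sum_congr rfl (fun i _ => h2 i),
              Finset.sum_congr rfl (fun i _ => h3 i)]
  have hX : ∑ i, w i * (a i + b i) ^ 2 ≤ (A + B) ^ 2 := by
    have hexp : ∑ i, w i * (a i + b i) ^ 2
        = (∑ i, w i * a i ^ 2) + 2 * (∑ i, w i * (a i * b i)) + (∑ i, w i * b i ^ 2) := by
      calc ∑ i, w i * (a i + b i) ^ 2
          = ∑ i, (w i * a i ^ 2 + 2 * (w i * (a i * b i)) + w i * b i ^ 2) :=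
            Finset.sum_congr rfl fun i _ => by ring
        _ = (∑ i, w i * a i ^ 2) + 2 * (∑ i, w i * (a i * b i)) + (∑ i, w i * b i ^ 2) := by
            rw [Finset.sum_add_distrib, Finset.sum_add_distrib, ← Finset.mul_sum]
    nlinarith [hcs, hA2, hB2]
  calc Real.sqrt (∑ i, w i * (a i + b i) ^ 2)
      ≤ Real.sqrt ((A + B) ^ 2) := Real.sqrt_le_sqrt hX
    _ = A + B := by rw [Real.sqrt_sq (by linarith)]

/-- Proposition 1: error of a near-exact positive quadrature formula on an
arbitrary function `f`, in terms of the best uniform approximation error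
`E_S(f;X)` from `S` and the moment residual `ε`. -/
theorem near_exact_quadrature_error
    (M N : ℕ) (hM : 0 < M) (lam : Fin M → ℝ) (hlam : ∀ i, 0 < lam i)
    (ψ : Fin N → (Fin M → ℝ))
    (horth : ∀ j k, ∑ i, lam i * ψ j i * ψ k i = if j = k then 1 else 0)
    (hone : (fun _ => (1 : ℝ)) ∈ Submodule.span ℝ (Set.range ψ))
    (u : Fin M → ℝ) (hu : ∀ i, 0 ≤ u i) (ε : ℝ)
    (hres : Real.sqrt (∑ k, (∑ i, u i * ψ k i - ∑ i, lam i * ψ k i) ^ 2) = ε)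
    (f : Fin M → ℝ) :
    |∑ i, lam i * f i - ∑ i, u i * f i|
      ≤ 2 * (∑ i, lam i + ε * Real.sqrt (∑ i, lam i)) *
          (⨅ φ : Submodule.span ℝ (Set.range ψ),
            Finset.univ.sup' ⟨⟨0, hM⟩, Finset.mem_univ _⟩
              (fun i => |f i - (φ : Fin M → ℝ) i|))
        + ε * Real.sqrt (∑ i, lam i * f i ^ 2) := by
  have i0 : Fin M := ⟨0, hM⟩
  have hμpos : 0 < ∑ i, lam i :=
    Finset.sum_pos (fun i _ => hlam i) ⟨i0, Finset.mem_univ _⟩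
  set μ : ℝ := ∑ i, lam i with hμ
  set sμ : ℝ := Real.sqrt μ with hsμ
  have hsμ0 : 0 ≤ sμ := Real.sqrt_nonneg _
  have hsμ2 : sμ ^ 2 = μ := Real.sq_sqrt hμpos.le
  have hε0 : 0 ≤ ε := hres ▸ Real.sqrt_nonneg _
  set r : Fin N → ℝ := fun k => ∑ i, u i * ψ k i - ∑ i, lam i * ψ k i with hrdef
  have hr2 : Real.sqrt (∑ k, r k ^ 2) = ε := hres
  -- coefficients norm identity
  have hcoef : ∀ a : Fin N → ℝ,
      ∑ i, lam i * (∑ k, a k * ψ k i) ^ 2 = ∑ k, a k ^ 2 := by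
    intro a
    have step1 : ∀ i : Fin M, lam i * (∑ k, a k * ψ k i) ^ 2
        = ∑ j, ∑ k, a j * a k * (lam i * ψ j i * ψ k i) := by
      intro i
      rw [sq, Finset.sum_mul_sum, Finset.mul_sum]
      exact Finset.sum_congr rfl fun j _ => by
        rw [Finset.mul_sum]
        exact Finset.sum_congr rfl fun k _ => by ring
    rw [Finset.sum_congr rfl (fun i _ => step1 i), Finset.sum_comm]
    have step2 : ∀ j : Fin N,
        ∑ i, ∑ k, a j * a k * (lam i * ψ j i * ψ k i) = a j ^ 2 := by
      intro j
      rw [Finset.sum_comm]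
      have : ∀ k : Fin N, ∑ i, a j * a k * (lam i * ψ j i * ψ k i)
          = a j * a k * (if j = k then 1 else 0) := by
        intro k
        rw [← Finset.mul_sum, horth j k]
      rw [Finset.sum_congr rfl (fun k _ => this k)]
      simp [mul_ite, Finset.sum_ite_eq, sq]
    exact Finset.sum_congr rfl fun j _ => step2 j
  -- residual pairing identity
  have hpair : ∀ a : Fin N → ℝ,
      ∑ i, (u i - lam i) * (∑ k, a k * ψ k i) = ∑ k, a k * r k := by
    intro a
    have step1 : ∀ i : Fin M, (u i - lam i) * (∑ k, a k * ψ k i)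
        = ∑ k, a k * ((u i - lam i) * ψ k i) := by
      intro i
      rw [Finset.mul_sum]
      exact Finset.sum_congr rfl fun k _ => by ring
    rw [Finset.sum_congr rfl (fun i _ => step1 i), Finset.sum_comm]
    apply Finset.sum_congr rfl
    intro k _
    rw [← Finset.mul_sum]
    have hrk : r k = ∑ i, (u i - lam i) * ψ k i := by
      show (∑ i, u i * ψ k i - ∑ i, lam i * ψ k i) = _
      rw [← Finset.sum_sub_distrib]
      exact Finset.sum_congr rfl fun i _ => by ring
    rw [hrk]
  -- pairing bound via Cauchy–Schwarz
  have hpairbd : ∀ a : Fin N → ℝ,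
      |∑ i, (u i - lam i) * (∑ k, a k * ψ k i)|
        ≤ Real.sqrt (∑ i, lam i * (∑ k, a k * ψ k i) ^ 2) * ε := by
    intro a
    rw [hpair a]
    calc |∑ k, a k * r k|
        ≤ Real.sqrt (∑ k, a k ^ 2) * Real.sqrt (∑ k, r k ^ 2) := cs_abs _ _
      _ = Real.sqrt (∑ i, lam i * (∑ k, a k * ψ k i) ^ 2) * ε := by
          rw [hr2, hcoef a]
  -- the constant function 1 gives control on ∑ u
  obtain ⟨c, hc⟩ := (Submodule.mem_span_range_iff_exists_fun ℝ).mp hone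
  have hc1 : ∀ i : Fin M, ∑ k, c k * ψ k i = 1 := by
    intro i
    have := congrFun hc i
    simpa [Finset.sum_apply] using this
  have hU : ∑ i, u i ≤ μ + ε * sμ := by
    have h1 : |∑ i, u i - μ| ≤ sμ * ε := by
      have h2 : ∑ i, (u i - lam i) * (∑ k, c k * ψ k i) = ∑ i, u i - μ := by
        calc ∑ i, (u i - lam i) * (∑ k, c k * ψ k i)
            = ∑ i, (u i - lam i) := Finset.sum_congr rfl fun i _ => by rw [hc1 i]; ring
          _ = ∑ i, u i - μ := by rw [hμ, Finset.sum_sub_distrib]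
      have h3 := hpairbd c
      rw [h2] at h3
      have h4 : ∑ i, lam i * (∑ k, c k * ψ k i) ^ 2 = μ := by
        rw [hμ]
        exact Finset.sum_congr rfl fun i _ => by rw [hc1 i]; ring
      rwa [h4] at h3
    have := abs_le.mp h1
    nlinarith [this.2]
  -- the main bound for an arbitrary element of the span
  set F : ℝ := Real.sqrt (∑ i, lam i * f i ^ 2) with hF
  have hF0 : 0 ≤ F := Real.sqrt_nonneg _
  have key : ∀ φ : Submodule.span ℝ (Set.range ψ),
      |∑ i, lam i * f i - ∑ i, u i * f i|
        ≤ 2 * (μ + ε * sμ) *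
            (Finset.univ.sup' ⟨⟨0, hM⟩, Finset.mem_univ _⟩
              (fun i => |f i - (φ : Fin M → ℝ) i|)) + ε * F := by
    intro φ
    obtain ⟨a, ha⟩ := (Submodule.mem_span_range_iff_exists_fun ℝ).mp φ.2
    set p : Fin M → ℝ := fun i => ∑ k, a k * ψ k i with hp
    have hpφ : ∀ i, p i = (φ : Fin M → ℝ) i := by
      intro i
      have := congrFun ha i
      simpa [Finset.sum_apply, hp] using this
    set G : ℝ := Finset.univ.sup' ⟨⟨0, hM⟩, Finset.mem_univ _⟩
        (fun i => |f i - (φ : Fin M → ℝ) i|) with hGdef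
    have hG : ∀ i : Fin M, |f i - p i| ≤ G := by
      intro i
      rw [hpφ i]
      exact Finset.le_sup' (fun j => |f j - (φ : Fin M → ℝ) j|) (Finset.mem_univ i)
    have hG0 : 0 ≤ G := le_trans (abs_nonneg _) (hG ⟨0, hM⟩)
    -- split
    have hsplit : ∑ i, lam i * f i - ∑ i, u i * f i
        = (∑ i, lam i * (f i - p i)) - (∑ i, u i * (f i - p i))
          - (∑ i, (u i - lam i) * p i) := by
      simp only [mul_sub, sub_mul, Finset.sum_sub_distrib]
      ring
    -- bound each piece
    have hb1 : |∑ i, lam i * (f i - p i)| ≤ μ * G := by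
      calc |∑ i, lam i * (f i - p i)| ≤ ∑ i, |lam i * (f i - p i)| :=
            Finset.abs_sum_le_sum_abs _ _
        _ ≤ ∑ i, lam i * G := by
            apply Finset.sum_le_sum
            intro i _
            rw [abs_mul, abs_of_pos (hlam i)]
            exact mul_le_mul_of_nonneg_left (hG i) (hlam i).le
        _ = μ * G := by rw [← Finset.sum_mul, hμ]
    have hb2 : |∑ i, u i * (f i - p i)| ≤ (∑ i, u i) * G := by
      calc |∑ i, u i * (f i - p i)| ≤ ∑ i, |u i * (f i - p i)| :=
            Finset.abs_sum_le_sum_abs _ _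
        _ ≤ ∑ i, u i * G := by
            apply Finset.sum_le_sum
            intro i _
            rw [abs_mul, abs_of_nonneg (hu i)]
            exact mul_le_mul_of_nonneg_left (hG i) (hu i)
        _ = (∑ i, u i) * G := by rw [← Finset.sum_mul]
    have hb3 : |∑ i, (u i - lam i) * p i| ≤ ε * (F + sμ * G) := by
      have h3 := hpairbd a
      have hnorm : Real.sqrt (∑ i, lam i * p i ^ 2) ≤ F + sμ * G := by
        have hmink : Real.sqrt (∑ i, lam i * p i ^ 2)
            ≤ Real.sqrt (∑ i, lam i * f i ^ 2)
              + Real.sqrt (∑ i, lam i * (p i - f i) ^ 2) := by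
          have := minkowski_w lam f (fun i => p i - f i) (fun i => (hlam i).le)
          simpa using this
        have hrest : Real.sqrt (∑ i, lam i * (p i - f i) ^ 2) ≤ sμ * G := by
          have hle : ∑ i, lam i * (p i - f i) ^ 2 ≤ μ * G ^ 2 := by
            rw [hμ, Finset.sum_mul]
            apply Finset.sum_le_sum
            intro i _
            have h5 : (p i - f i) ^ 2 ≤ G ^ 2 := by
              have := hG i
              have habs : |p i - f i| ≤ G := by rwa [abs_sub_comm] at this
              nlinarith [abs_nonneg (p i - f i), sq_abs (p i - f i)]
            exact mul_le_mul_of_nonneg_left h5 (hlam i).le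
          calc Real.sqrt (∑ i, lam i * (p i - f i) ^ 2)
              ≤ Real.sqrt (μ * G ^ 2) := Real.sqrt_le_sqrt hle
            _ = sμ * G := by
                rw [Real.sqrt_mul hμpos.le, Real.sqrt_sq hG0, hsμ]
        calc Real.sqrt (∑ i, lam i * p i ^ 2)
            ≤ Real.sqrt (∑ i, lam i * f i ^ 2)
              + Real.sqrt (∑ i, lam i * (p i - f i) ^ 2) := hmink
          _ ≤ F + sμ * G := by rw [hF]; linarith
      calc |∑ i, (u i - lam i) * p i|
          ≤ Real.sqrt (∑ i, lam i * p i ^ 2) * ε := h3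
        _ ≤ (F + sμ * G) * ε := by
            apply mul_le_mul_of_nonneg_right hnorm hε0
        _ = ε * (F + sμ * G) := by ring
    -- combine
    rw [hsplit]
    have habs : |(∑ i, lam i * (f i - p i)) - (∑ i, u i * (f i - p i))
        - (∑ i, (u i - lam i) * p i)|
        ≤ |∑ i, lam i * (f i - p i)| + |∑ i, u i * (f i - p i)|
          + |∑ i, (u i - lam i) * p i| := by
      calc |(∑ i, lam i * (f i - p i)) - (∑ i, u i * (f i - p i))
          - (∑ i, (u i - lam i) * p i)|
          ≤ |(∑ i, lam i * (f i - p i)) - (∑ i, u i * (f i - p i))|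
            + |∑ i, (u i - lam i) * p i| := abs_sub _ _
        _ ≤ |∑ i, lam i * (f i - p i)| + |∑ i, u i * (f i - p i)|
            + |∑ i, (u i - lam i) * p i| := by
            have := abs_sub (∑ i, lam i * (f i - p i)) (∑ i, u i * (f i - p i))
            linarith
    nlinarith [habs, hb1, hb2, hb3, mul_le_mul_of_nonneg_right hU hG0]
  -- take the infimum
  have hCnn : 0 ≤ 2 * (μ + ε * sμ) := by positivity
  have h1 : |∑ i, lam i * f i - ∑ i, u i * f i| - ε * F
      ≤ ⨅ φ : Submodule.span ℝ (Set.range ψ), 2 * (μ + ε * sμ) *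
          (Finset.univ.sup' ⟨⟨0, hM⟩, Finset.mem_univ _⟩
            (fun i => |f i - (φ : Fin M → ℝ) i|)) := by
    apply le_ciInf
    intro φ
    linarith [key φ]
  rw [← Real.mul_iInf_of_nonneg hCnn] at h1
  linarith
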